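/- Let k be a field, H a k-bialgebra, and (M,·,ρ) a left-right H-Hopf module: M is a left H-module (with k-linear action), a right H-comodule via a k-linear coassociative counital map ρ : M → M⊗H written ρ(m) = Σ m₍₀₎⊗m₍₁₎, and the compatibility ρ(h·m) = Σ h₍₁₎·m₍₀₎ ⊗ h₍₂₎m₍₁₎ holds for all h ∈ H, m ∈ M. Then the k-linear map R := R_{(M,·,ρ)} : M⊗M → M⊗M defined by R(m⊗n) = Σ n₍₁₎·m ⊗ n₍₀₎ is a solution of the Hopf equation (R¹²R²³ = R²³R¹³R¹²). -/
import Mathlib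


open TensorProduct LinearMap

section HopfEq

variable (k V : Type*) [Field k] [AddCommGroup V] [Module k V]

/-- The flip map `τ : V ⊗ V → V ⊗ V`, `τ(v ⊗ w) = w ⊗ v`. -/
noncomputable def flipMap : V ⊗[k] V →ₗ[k] V ⊗[k] V :=
  (TensorProduct.comm k V V).toLinearMap

variable {k V}

/-- `R¹² = R ⊗ I` as an endomorphism of `V ⊗ V ⊗ V`. -/
noncomputable def map12 (R : V ⊗[k] V →ₗ[k] V ⊗[k] V) :
    V ⊗[k] (V ⊗[k] V) →ₗ[k] V ⊗[k] (V ⊗[k] V) :=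
  (TensorProduct.assoc k V V V).toLinearMap ∘ₗ R.rTensor V ∘ₗ
    (TensorProduct.assoc k V V V).symm.toLinearMap

/-- `R²³ = I ⊗ R` as an endomorphism of `V ⊗ V ⊗ V`. -/
noncomputable def map23 (R : V ⊗[k] V →ₗ[k] V ⊗[k] V) :
    V ⊗[k] (V ⊗[k] V) →ₗ[k] V ⊗[k] (V ⊗[k] V) :=
  R.lTensor V

/-- `R¹³ = (I ⊗ τ)(R ⊗ I)(I ⊗ τ)` as an endomorphism of `V ⊗ V ⊗ V`. -/
noncomputable def map13 (R : V ⊗[k] V →ₗ[k] V ⊗[k] V) :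
    V ⊗[k] (V ⊗[k] V) →ₗ[k] V ⊗[k] (V ⊗[k] V) :=
  (flipMap k V).lTensor V ∘ₗ map12 R ∘ₗ (flipMap k V).lTensor V

/-- `R` is a solution of the Hopf equation: `R¹²R²³ = R²³R¹³R¹²`. -/
def IsHopfSolution (R : V ⊗[k] V →ₗ[k] V ⊗[k] V) : Prop :=
  map12 R ∘ₗ map23 R = map23 R ∘ₗ map13 R ∘ₗ map12 R

/-- `R` is a solution of the pentagonal equation: `R¹²R¹³R²³ = R²³R¹²`. -/
def IsPentagonSolution (R : V ⊗[k] V →ₗ[k] V ⊗[k] V) : Prop :=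
  map12 R ∘ₗ map13 R ∘ₗ map23 R = map23 R ∘ₗ map12 R

end HopfEq

variable (k H M : Type*) [Field k] [Ring H] [Bialgebra k H] [AddCommGroup M] [Module k M]

/-- For a left action `μ : H ⊗ M → M` and a coaction `ρ : M → M ⊗ H`,
`ρ(m) = Σ m₍₀₎ ⊗ m₍₁₎`, the map `R : M ⊗ M → M ⊗ M`, `R(m ⊗ n) = Σ n₍₁₎·m ⊗ n₍₀₎`. -/
noncomputable def hopfModuleMap (μ : H ⊗[k] M →ₗ[k] M) (ρ : M →ₗ[k] M ⊗[k] H) :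
    M ⊗[k] M →ₗ[k] M ⊗[k] M :=
  μ.rTensor M ∘ₗ ((TensorProduct.comm k M H).toLinearMap.rTensor M) ∘ₗ
    (TensorProduct.assoc k M H M).symm.toLinearMap ∘ₗ
    ((TensorProduct.comm k M H).toLinearMap.lTensor M) ∘ₗ ρ.lTensor M

section Aux

variable {k H M}

/-- `Kmap μ (m ⊗ (n ⊗ h)) = μ(h ⊗ m) ⊗ n`; thus `hopfModuleMap μ ρ = Kmap μ ∘ ρ.lTensor`. -/
noncomputable def Kmap (μ : H ⊗[k] M →ₗ[k] M) : M ⊗[k] (M ⊗[k] H) →ₗ[k] M ⊗[k] M :=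
  μ.rTensor M ∘ₗ ((TensorProduct.comm k M H).toLinearMap.rTensor M) ∘ₗ
    (TensorProduct.assoc k M H M).symm.toLinearMap ∘ₗ
    ((TensorProduct.comm k M H).toLinearMap.lTensor M)

@[simp] lemma Kmap_tmul (μ : H ⊗[k] M →ₗ[k] M) (m n : M) (h : H) :
    Kmap μ (m ⊗ₜ[k] (n ⊗ₜ[k] h)) = μ (h ⊗ₜ[k] m) ⊗ₜ[k] n := by
  simp [Kmap]

lemma hopfModuleMap_eq (μ : H ⊗[k] M →ₗ[k] M) (ρ : M →ₗ[k] M ⊗[k] H) :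
    hopfModuleMap k H M μ ρ = Kmap μ ∘ₗ ρ.lTensor M := rfl

lemma hopfModuleMap_tmul (μ : H ⊗[k] M →ₗ[k] M) (ρ : M →ₗ[k] M ⊗[k] H) (m n : M) :
    hopfModuleMap k H M μ ρ (m ⊗ₜ[k] n) = Kmap μ (m ⊗ₜ[k] ρ n) := by
  rw [hopfModuleMap_eq]; simp

/-- `Fmap μ w (p₀ ⊗ (h ⊗ h')) = Σ μ(h' ⊗ w₁) ⊗ (μ(h ⊗ w₂) ⊗ p₀)` for `w = Σ w₁ ⊗ w₂`. -/
noncomputable def Fmap (μ : H ⊗[k] M →ₗ[k] M) (w : M ⊗[k] M) :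
    M ⊗[k] (H ⊗[k] H) →ₗ[k] M ⊗[k] (M ⊗[k] M) :=
  ((TensorProduct.assoc k M M M).toLinearMap ∘ₗ
    (TensorProduct.comm k M (M ⊗[k] M)).toLinearMap) ∘ₗ
  (TensorProduct.map μ μ ∘ₗ (TensorProduct.tensorTensorTensorComm k H H M M).toLinearMap ∘ₗ
    ((TensorProduct.mk k (H ⊗[k] H) (M ⊗[k] M)).flip w) ∘ₗ
    (TensorProduct.comm k H H).toLinearMap).lTensor M

@[simp] lemma Fmap_tmul (μ : H ⊗[k] M →ₗ[k] M) (x y p₀ : M) (h h' : H) :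
    Fmap μ (x ⊗ₜ[k] y) (p₀ ⊗ₜ[k] (h ⊗ₜ[k] h')) =
      μ (h' ⊗ₜ[k] x) ⊗ₜ[k] (μ (h ⊗ₜ[k] y) ⊗ₜ[k] p₀) := by
  simp [Fmap]

@[simp] lemma Fmap_zero (μ : H ⊗[k] M →ₗ[k] M) (t : M ⊗[k] (H ⊗[k] H)) :
    Fmap μ (0 : M ⊗[k] M) t = 0 := by
  induction t using TensorProduct.induction_on with
  | zero => simp
  | tmul p u =>
    induction u using TensorProduct.induction_on with
    | zero => simp [tmul_zero]
    | tmul h h' => simp [Fmap, tmul_zero]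
    | add u v hu hv => simp [tmul_add, hu, hv]
  | add s t hs ht => simp [hs, ht]

@[simp] lemma Fmap_add (μ : H ⊗[k] M →ₗ[k] M) (w w' : M ⊗[k] M)
    (t : M ⊗[k] (H ⊗[k] H)) :
    Fmap μ (w + w') t = Fmap μ w t + Fmap μ w' t := by
  induction t using TensorProduct.induction_on with
  | zero => simp
  | tmul p u =>
    induction u using TensorProduct.induction_on with
    | zero => simp [tmul_zero]
    | tmul h h' => simp [Fmap, tmul_add, add_tmul]
    | add u v hu hv =>
      simp only [tmul_add, map_add, hu, hv]; abel
  | add s t hs ht =>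
    simp only [map_add, hs, ht]; abel

end Aux

/-- if `(M, μ, ρ)` is a left-right `H`-Hopf module (i.e. `M` is a left
`H`-module via `μ`, a right `H`-comodule via `ρ`, and
`ρ(h·m) = Σ h₍₁₎·m₍₀₎ ⊗ h₍₂₎m₍₁₎`), then the map `R(m ⊗ n) = Σ n₍₁₎·m ⊗ n₍₀₎` is a
solution of the Hopf equation. -/
theorem hopfModuleMap_isHopfSolution (μ : H ⊗[k] M →ₗ[k] M) (ρ : M →ₗ[k] M ⊗[k] H)
    (hμ_one : ∀ m : M, μ ((1 : H) ⊗ₜ[k] m) = m)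
    (hμ_mul : ∀ (a b : H) (m : M), μ ((a * b) ⊗ₜ[k] m) = μ (a ⊗ₜ[k] μ (b ⊗ₜ[k] m)))
    (hρ_coassoc : (TensorProduct.assoc k M H H).toLinearMap ∘ₗ ρ.rTensor H ∘ₗ ρ
        = (Coalgebra.comul (R := k)).lTensor M ∘ₗ ρ)
    (hρ_counit : (TensorProduct.rid k M).toLinearMap ∘ₗ
        (Coalgebra.counit (R := k)).lTensor M ∘ₗ ρ = LinearMap.id)
    (hcompat : ρ ∘ₗ μ = TensorProduct.map μ (LinearMap.mul' k H) ∘ₗ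
        (TensorProduct.tensorTensorTensorComm k H H M H).toLinearMap ∘ₗ
        TensorProduct.map (Coalgebra.comul (R := k)) ρ) :
    IsHopfSolution (hopfModuleMap k H M μ ρ) := by
  set R := hopfModuleMap k H M μ ρ with hRdef
  have hR : ∀ a b : M, R (a ⊗ₜ[k] b) = Kmap μ (a ⊗ₜ[k] ρ b) := fun a b =>
    hopfModuleMap_tmul μ ρ a b
  -- LHS claim
  have claimL : ∀ m n p : M,
      map12 R (map23 R (m ⊗ₜ[k] (n ⊗ₜ[k] p))) =
        Fmap μ (Kmap μ (m ⊗ₜ[k] ρ n)) ((Coalgebra.comul (R := k)).lTensor M (ρ p)) := by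
    intro m n p
    have h1 : map23 R (m ⊗ₜ[k] (n ⊗ₜ[k] p)) = m ⊗ₜ[k] Kmap μ (n ⊗ₜ[k] ρ p) := by
      simp only [map23, lTensor_tmul, hR]
    rw [h1]
    generalize ρ p = t
    induction t using TensorProduct.induction_on with
    | zero => simp [tmul_zero]
    | tmul p₀ h =>
      have hc := LinearMap.congr_fun hcompat (h ⊗ₜ[k] n)
      simp only [comp_apply, TensorProduct.map_tmul, LinearEquiv.coe_coe] at hc
      have h2 : map12 R (m ⊗ₜ[k] (μ (h ⊗ₜ[k] n) ⊗ₜ[k] p₀)) =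
          (TensorProduct.assoc k M M M) (R (m ⊗ₜ[k] μ (h ⊗ₜ[k] n)) ⊗ₜ[k] p₀) := by
        simp [map12]
      rw [Kmap_tmul, h2, hR, hc, lTensor_tmul]
      generalize (Coalgebra.comul (R := k)) h = u
      generalize ρ n = s
      induction u using TensorProduct.induction_on with
      | zero => simp [zero_tmul, tmul_zero]
      | tmul a b =>
        induction s using TensorProduct.induction_on with
        | zero => simp [tmul_zero]
        | tmul n₀ c =>
          simp [hμ_mul]
        | add s₁ s₂ hs₁ hs₂ =>
          simp only [tmul_add, add_tmul, map_add, Fmap_add, hs₁, hs₂]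
      | add u₁ u₂ hu₁ hu₂ =>
        simp only [add_tmul, tmul_add, map_add, hu₁, hu₂]
    | add t₁ t₂ ht₁ ht₂ =>
      simp only [tmul_add, map_add, ht₁, ht₂]
  -- RHS claim
  have claimR : ∀ m n p : M,
      map23 R (map13 R (map12 R (m ⊗ₜ[k] (n ⊗ₜ[k] p)))) =
        Fmap μ (Kmap μ (m ⊗ₜ[k] ρ n))
          ((TensorProduct.assoc k M H H) ((ρ.rTensor H) (ρ p))) := by
    intro m n p
    have h1 : map12 R (m ⊗ₜ[k] (n ⊗ₜ[k] p)) =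
        (TensorProduct.assoc k M M M) (Kmap μ (m ⊗ₜ[k] ρ n) ⊗ₜ[k] p) := by
      simp [map12, hR]
    rw [h1]
    generalize Kmap μ (m ⊗ₜ[k] ρ n) = w
    induction w using TensorProduct.induction_on with
    | zero => simp [zero_tmul]
    | tmul x y =>
      simp only [TensorProduct.assoc_tmul]
      have h2 : map13 R (x ⊗ₜ[k] (y ⊗ₜ[k] p)) =
          (flipMap k M).lTensor M
            ((TensorProduct.assoc k M M M) (Kmap μ (x ⊗ₜ[k] ρ p) ⊗ₜ[k] y)) := by
        simp only [map13, map12, comp_apply, lTensor_tmul, flipMap,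
          LinearEquiv.coe_coe, TensorProduct.comm_tmul,
          TensorProduct.assoc_symm_tmul, rTensor_tmul, hR]
      rw [h2]
      generalize ρ p = t
      induction t using TensorProduct.induction_on with
      | zero => simp [tmul_zero, zero_tmul]
      | tmul p₀ h =>
        simp only [Kmap_tmul, TensorProduct.assoc_tmul, lTensor_tmul, flipMap,
          LinearEquiv.coe_coe, TensorProduct.comm_tmul, map23, rTensor_tmul, hR]
        generalize ρ p₀ = s
        induction s using TensorProduct.induction_on with
        | zero => simp [tmul_zero, zero_tmul]
        | tmul q a => simp
        | add s₁ s₂ hs₁ hs₂ =>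
          simp only [tmul_add, add_tmul, map_add, hs₁, hs₂]
      | add t₁ t₂ ht₁ ht₂ =>
        simp only [tmul_add, add_tmul, map_add, ht₁, ht₂]
    | add w₁ w₂ hw₁ hw₂ =>
      simp only [add_tmul, map_add, Fmap_add, hw₁, hw₂]
  -- conclude
  unfold IsHopfSolution
  apply TensorProduct.ext'
  intro m t
  induction t using TensorProduct.induction_on with
  | zero => simp [tmul_zero]
  | tmul n p =>
    have hco := LinearMap.congr_fun hρ_coassoc p
    simp only [comp_apply, LinearEquiv.coe_coe] at hco
    simp only [comp_apply]
    rw [claimL m n p, claimR m n p, hco]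
  | add t₁ t₂ ht₁ ht₂ =>
    simp only [tmul_add, map_add, ht₁, ht₂]
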